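/- Let R be a commutative artinian principal ideal ring, M and M' finitely generated R-modules, N an R-module isomorphic to R, ⟨,⟩ : M × M → N a symmetric R-bilinear form and ⟨,⟩' : M' × M' → N a non-degenerate symmetric R-bilinear form. Let φ : M' → M be an R-linear map with ⟨φ(x), φ(y)⟩ = ⟨x, y⟩' for all x, y ∈ M'. Then φ is injective, M is the internal direct sum of φ(M') and φ(M')^⊥, and ⟨,⟩ is non-degenerate if and only if the restriction of ⟨,⟩ to φ(M')^⊥ × φ(M')^⊥ is non-degenerate (i.e. the map φ(M')^⊥ → Hom_R(φ(M')^⊥, N), m ↦ ⟨m, −⟩, is an isomorphism). -/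

import Mathlib

/-- The orthogonal complement of a submodule with respect to a bilinear form. -/
def orth {R M N : Type*} [CommRing R] [AddCommGroup M] [Module R M]
    [AddCommGroup N] [Module R N] (B : M →ₗ[R] M →ₗ[R] N) (L : Submodule R M) :
    Submodule R M where
  carrier := {x | ∀ l ∈ L, B x l = 0}
  add_mem' := by
    intro a b ha hb l hl
    simp [ha l hl, hb l hl]
  zero_mem' := by intro l hl; simp
  smul_mem' := by
    intro c a ha l hl
    simp [ha l hl]

/-- Let `R` be a commutative artinian principal ideal ring, `M` and `M'` finitely generated
`R`-modules, `N` an `R`-module isomorphic to `R`, `⟨,⟩ : M × M → N` a symmetric bilinear form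
and `⟨,⟩' : M' × M' → N` a non-degenerate symmetric bilinear form.  Let `φ : M' → M` be an
`R`-linear map respecting the forms.  Then `φ` is injective, `M` is the internal direct sum of
`φ(M')` and `φ(M')^⊥`, and `⟨,⟩` is non-degenerate iff its restriction to `φ(M')^⊥` is
non-degenerate. -/
theorem orthogonal_decomposition_of_nondegenerate_submodule
    (R M M' N : Type*) [CommRing R] [IsArtinianRing R] [IsPrincipalIdealRing R]
    [AddCommGroup M] [Module R M] [Module.Finite R M]
    [AddCommGroup M'] [Module R M'] [Module.Finite R M']
    [AddCommGroup N] [Module R N] (e : N ≃ₗ[R] R)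
    (B : M →ₗ[R] M →ₗ[R] N) (hB : ∀ x y, B x y = B y x)
    (B' : M' →ₗ[R] M' →ₗ[R] N) (hB' : ∀ x y, B' x y = B' y x)
    (hB'nd : Function.Bijective B')
    (φ : M' →ₗ[R] M) (hφ : ∀ x y, B (φ x) (φ y) = B' x y) :
    Function.Injective φ ∧
      IsCompl (LinearMap.range φ) (orth B (LinearMap.range φ)) ∧
      (Function.Bijective B ↔
        Function.Bijective
          (B.domRestrict₁₂ (orth B (LinearMap.range φ)) (orth B (LinearMap.range φ)))) := by
  set P := LinearMap.range φ with hPdef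
  set Q := orth B P with hQdef
  -- the linear equivalence induced by B'
  let E : M' ≃ₗ[R] (M' →ₗ[R] N) := LinearEquiv.ofBijective B' hB'nd
  have hE : ∀ x, E x = B' x := fun x => rfl
  -- injectivity of φ
  have hinj : Function.Injective φ := by
    intro x y hxy
    apply hB'nd.injective
    ext z
    rw [← hφ, ← hφ, hxy]
  -- basic orthogonality facts
  have hQP : ∀ q ∈ Q, ∀ p ∈ P, B q p = 0 := fun q hq => hq
  have hPQ : ∀ p ∈ P, ∀ q ∈ Q, B p q = 0 := fun p hp q hq => by
    rw [hB]; exact hq p hp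
  -- the projection π : M → M'
  let ψ : M →ₗ[R] (M' →ₗ[R] N) := (LinearMap.lcomp R N φ).comp B
  let π : M →ₗ[R] M' := E.symm.toLinearMap ∘ₗ ψ
  have hπ : ∀ x y, B' (π x) y = B x (φ y) := by
    intro x y
    have h1 : B' (π x) = ψ x := by
      rw [← hE]
      exact E.apply_symm_apply (ψ x)
    rw [h1]; rfl
  have hmem : ∀ x : M, x - φ (π x) ∈ Q := by
    intro x l hl
    obtain ⟨y, rfl⟩ := hl
    simp only [map_sub, LinearMap.sub_apply, hφ, hπ]
    exact sub_self _
  have hcompl : IsCompl P Q := by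
    constructor
    · rw [disjoint_iff]
      rw [Submodule.eq_bot_iff]
      rintro x ⟨hxP, hxQ⟩
      obtain ⟨y, rfl⟩ := hxP
      have hy : y = 0 := by
        apply hB'nd.injective
        ext z
        rw [← hφ, map_zero]
        exact hxQ (φ z) ⟨z, rfl⟩
      rw [hy, map_zero]
    · rw [codisjoint_iff, eq_top_iff]
      intro x _
      exact Submodule.mem_sup.mpr ⟨φ (π x), ⟨π x, rfl⟩, x - φ (π x), hmem x,
        add_sub_cancel _ _⟩
  refine ⟨hinj, hcompl, ?_⟩
  set Bq := B.domRestrict₁₂ Q Q with hBqdef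
  have hBq : ∀ (q q' : Q), Bq q q' = B q q' := fun _ _ => rfl
  -- decomposition of arbitrary elements
  have hdec : ∀ x : M, ∃ y : M', ∃ q : Q, x = φ y + (q : M) := by
    intro x
    exact ⟨π x, ⟨x - φ (π x), hmem x⟩, by simp⟩
  constructor
  · -- B bijective → Bq bijective
    intro hBbij
    constructor
    · intro q q' h
      have h0 : Bq q - Bq q' = 0 := by rw [h, sub_self]
      have : B (q : M) = B (q' : M) := by
        ext m
        obtain ⟨y, qq, rfl⟩ := hdec m
        have h1 : B (q:M) (φ y) = 0 := hQP _ q.2 _ ⟨y, rfl⟩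
        have h2 : B (q':M) (φ y) = 0 := hQP _ q'.2 _ ⟨y, rfl⟩
        have h3 : B (q:M) (qq:M) = B (q':M) (qq:M) := by
          have := congrFun (congrArg DFunLike.coe h) qq
          exact this
        simp [h1, h2, h3]
      have := hBbij.injective this
      exact Subtype.ext this
    · intro g
      -- extend g to M via projection onto Q
      let prQ : M →ₗ[R] Q := Q.linearProjOfIsCompl P hcompl.symm
      obtain ⟨x, hx⟩ := hBbij.surjective (g ∘ₗ prQ)
      have hxQ : x ∈ Q := by
        intro l hl
        have : B x l = g (prQ l) := by rw [hx]; rfl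
        rw [this, show prQ l = 0 from Submodule.projectionOnto_apply_of_mem_right hcompl.symm hl, map_zero]
      refine ⟨⟨x, hxQ⟩, ?_⟩
      ext q'
      have : B x (q' : M) = g (prQ (q' : M)) := by rw [hx]; rfl
      rw [hBq, this, show prQ (q' : M) = q' from Submodule.projectionOnto_apply_left hcompl.symm q']
  · -- Bq bijective → B bijective
    intro hq
    constructor
    · intro x x' hxx
      obtain ⟨y, qx, rfl⟩ := hdec x
      obtain ⟨y', qx', rfl⟩ := hdec x'
      have key : ∀ z, B' y z = B' y' z := by
        intro z
        have h1 := congrFun (congrArg DFunLike.coe hxx) (φ z)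
        simp only [map_add, LinearMap.add_apply] at h1
        rw [hφ, hφ, hQP _ qx.2 _ ⟨z, rfl⟩, hQP _ qx'.2 _ ⟨z, rfl⟩] at h1
        simpa using h1
      have hyy : y = y' := hB'nd.injective (LinearMap.ext key)
      subst hyy
      have keyq : Bq qx = Bq qx' := by
        ext qz
        have h1 := congrFun (congrArg DFunLike.coe hxx) (qz : M)
        simp only [map_add, LinearMap.add_apply] at h1
        rw [hPQ _ ⟨y, rfl⟩ _ qz.2] at h1
        simpa [hBq] using h1
      rw [hq.injective keyq]
    · intro f
      obtain ⟨qf, hqf⟩ := hq.surjective (f ∘ₗ Q.subtype)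
      let y' : M' := E.symm (f ∘ₗ φ)
      refine ⟨φ y' + (qf : M), ?_⟩
      ext m
      obtain ⟨z, qz, rfl⟩ := hdec m
      have hBy' : B' y' = f ∘ₗ φ := by
        rw [← hE]; exact E.apply_symm_apply _
      have e1 : B (φ y') (φ z) = f (φ z) := by rw [hφ, hBy']; rfl
      have e2 : B (qf : M) (φ z) = 0 := hQP _ qf.2 _ ⟨z, rfl⟩
      have e3 : B (φ y') (qz : M) = 0 := hPQ _ ⟨y', rfl⟩ _ qz.2
      have e4 : B (qf : M) (qz : M) = f (qz : M) := by
        have := congrFun (congrArg DFunLike.coe hqf) qz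
        exact this
      simp only [map_add, LinearMap.add_apply, e1, e2, e3, e4, add_zero, zero_add]
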